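/- Define the sequence a_l = (l!)^{1 + n/(n−1)} 2^l λ^{l/(n−1)} / (2l)! for integer n ≥ 2 and λ = (n−1)^{n−1}/(n/2)^n (λ = 1 for n = 2). Then a_{l+1}/a_l = λ^{1/(n−1)} (l+1)^{n/(n−1)} / (2l+1) ≥ 1 for all integers l ≥ 1; i.e., (a_l) is nondecreasing. -/

import Mathlib

open Real

/-- `λ(n) = (n−1)^{n−1}/(n/2)^n` for `n > 2`, and `λ = 1` for `n = 2`. -/
noncomputable def lamConst (n : ℕ) : ℝ :=
  if n ≤ 2 then 1 else ((n : ℝ) - 1) ^ (n - 1) / ((n : ℝ) / 2) ^ n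

/-- `a_l = (l!)^{1 + n/(n−1)} 2^l λ^{l/(n−1)} / (2l)!`. -/
noncomputable def coeffA (n : ℕ) (l : ℕ) : ℝ :=
  (l.factorial : ℝ) ^ ((1 : ℝ) + (n : ℝ) / ((n : ℝ) - 1)) * 2 ^ l *
    lamConst n ^ ((l : ℝ) / ((n : ℝ) - 1)) / ((2 * l).factorial : ℝ)

lemma lamConst_pos (n : ℕ) (hn : 2 ≤ n) : 0 < lamConst n := by
  unfold lamConst
  split
  · norm_num
  · rename_i h
    have h3 : 3 ≤ n := by omega
    have hcast : (3:ℝ) ≤ (n:ℝ) := by exact_mod_cast h3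
    exact div_pos (pow_pos (by linarith) _) (pow_pos (by linarith) _)

lemma lam_rpow (n : ℕ) (hn : 3 ≤ n) :
    lamConst n ^ ((1:ℝ)/((n:ℝ)-1)) =
      ((n:ℝ)-1) / ((n:ℝ)/2) ^ ((n:ℝ)/((n:ℝ)-1)) := by
  have hcast : (3:ℝ) ≤ (n:ℝ) := by exact_mod_cast hn
  have hx : (0:ℝ) < (n:ℝ) - 1 := by linarith
  have hy : (0:ℝ) < (n:ℝ)/2 := by linarith
  have hne : ((n:ℝ)-1) ≠ 0 := ne_of_gt hx
  have hmain : lamConst n = ((n:ℝ)-1) ^ (((n:ℝ)-1)) / ((n:ℝ)/2) ^ ((n:ℝ)) := by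
    unfold lamConst
    rw [if_neg (by omega)]
    have h1 : (((n-1 : ℕ)):ℝ) = (n:ℝ) - 1 := by
      have : 1 ≤ n := by omega
      push_cast [this]; ring
    rw [← Real.rpow_natCast ((n:ℝ)-1) (n-1), ← Real.rpow_natCast ((n:ℝ)/2) n, h1]
  rw [hmain, Real.div_rpow (Real.rpow_nonneg hx.le _) (Real.rpow_nonneg hy.le _),
    ← Real.rpow_mul hx.le, ← Real.rpow_mul hy.le]
  rw [show ((n:ℝ)-1) * (1/((n:ℝ)-1)) = 1 by field_simp,
    show (n:ℝ) * (1/((n:ℝ)-1)) = (n:ℝ)/((n:ℝ)-1) by field_simp, Real.rpow_one]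

lemma key_ineq (n : ℕ) (hn : 2 ≤ n) (l : ℕ) (hl : 1 ≤ l) :
    2*(l:ℝ)+1 ≤ lamConst n ^ ((1:ℝ)/((n:ℝ)-1)) *
      ((l:ℝ)+1) ^ ((n:ℝ)/((n:ℝ)-1)) := by
  have hl1 : (1:ℝ) ≤ (l:ℝ) := by exact_mod_cast hl
  rcases eq_or_lt_of_le hn with h2 | h3
  · -- n = 2
    subst h2
    have hlc : lamConst 2 = 1 := by unfold lamConst; norm_num
    rw [hlc, Real.one_rpow, one_mul]
    rw [show ((2:ℕ):ℝ)/(((2:ℕ):ℝ)-1) = ((2:ℕ):ℝ) by norm_num, Real.rpow_natCast]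
    nlinarith [sq_nonneg ((l:ℝ))]
  · have hn3 : 3 ≤ n := h3
    have hcast : (3:ℝ) ≤ (n:ℝ) := by exact_mod_cast hn3
    have hx : (0:ℝ) < (n:ℝ) - 1 := by linarith
    have hy : (0:ℝ) < (n:ℝ)/2 := by linarith
    have hn0 : (0:ℝ) < (n:ℝ) := by linarith
    set p : ℝ := (n:ℝ)/((n:ℝ)-1) with hp
    have hpq : p.HolderConjugate (n:ℝ) := by
      rw [Real.holderConjugate_iff]
      constructor
      · rw [hp]; rw [lt_div_iff₀ hx]; linarith
      · rw [hp]; field_simp; ring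
    set x : ℝ := (2*(l:ℝ)+2)/(n:ℝ) with hxdef
    have hx0 : 0 ≤ x := by positivity
    have yi := Real.young_inequality_of_nonneg hx0 (zero_le_one) hpq
    rw [Real.one_rpow, mul_one] at yi
    -- yi : x ≤ x ^ p / p + 1 / n
    have hpinv : 1/p = ((n:ℝ)-1)/(n:ℝ) := by rw [hp]; field_simp
    have hkey : 2*(l:ℝ)+1 ≤ ((n:ℝ)-1) * x ^ p := by
      have h1 : (n:ℝ) * x = 2*(l:ℝ)+2 := by rw [hxdef]; field_simp
      have h2 : x ^ p / p = x ^ p * (((n:ℝ)-1)/(n:ℝ)) := by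
        rw [div_eq_mul_one_div, hpinv]
      rw [h2] at yi
      have h3 := mul_le_mul_of_nonneg_left yi hn0.le
      rw [h1] at h3
      have h4 : (n:ℝ) * (x ^ p * (((n:ℝ)-1)/(n:ℝ)) + 1/(n:ℝ))
          = ((n:ℝ)-1) * x ^ p + 1 := by field_simp
      rw [h4] at h3; linarith
    rw [lam_rpow n hn3]
    have hxx : ((l:ℝ)+1)/((n:ℝ)/2) = x := by rw [hxdef]; field_simp
    have heq : ((n:ℝ)-1) / ((n:ℝ)/2) ^ p * ((l:ℝ)+1) ^ p = ((n:ℝ)-1) * x ^ p := by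
      rw [div_mul_eq_mul_div, mul_div_assoc,
        ← Real.div_rpow (by positivity) hy.le, hxx]
    rw [heq]; exact hkey

lemma ratio_eq (n : ℕ) (hn : 2 ≤ n) (l : ℕ) :
    coeffA n (l + 1) / coeffA n l =
      lamConst n ^ ((1 : ℝ) / ((n : ℝ) - 1)) *
        ((l : ℝ) + 1) ^ ((n : ℝ) / ((n : ℝ) - 1)) / (2 * (l : ℝ) + 1) := by
  have hlam0 := lamConst_pos n hn
  unfold coeffA
  have hfact : (((2 * (l+1)).factorial : ℕ) : ℝ)
      = (2*(l:ℝ)+2) * ((2*(l:ℝ)+1) * (((2*l).factorial : ℕ) : ℝ)) := by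
    have h : 2 * (l+1) = (2*l+1) + 1 := by ring
    rw [h, Nat.factorial_succ, Nat.factorial_succ]
    push_cast; ring
  have hfs : (((l+1).factorial : ℕ) : ℝ) = ((l:ℝ)+1) * (l.factorial : ℝ) := by
    rw [Nat.factorial_succ]; push_cast; ring
  set e : ℝ := (1:ℝ) + (n:ℝ)/((n:ℝ)-1) with he
  have hrp : (((l+1).factorial : ℕ) : ℝ) ^ e
      = ((l:ℝ)+1) * ((l:ℝ)+1) ^ ((n:ℝ)/((n:ℝ)-1)) * ((l.factorial : ℕ) : ℝ) ^ e := by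
    rw [hfs, Real.mul_rpow (by positivity) (by positivity)]
    rw [he, Real.rpow_add (by positivity), Real.rpow_one]
  have hlamc : ((↑(l+1) : ℝ))/((n:ℝ)-1) = (l:ℝ)/((n:ℝ)-1) + (1:ℝ)/((n:ℝ)-1) := by
    push_cast; ring
  have hlam : lamConst n ^ ((↑(l+1) : ℝ)/((n:ℝ)-1))
      = lamConst n ^ ((l:ℝ)/((n:ℝ)-1)) * lamConst n ^ ((1:ℝ)/((n:ℝ)-1)) := by
    rw [hlamc, Real.rpow_add hlam0]
  rw [hrp, hlam, hfact, pow_succ]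
  have hA : (0:ℝ) < ((l.factorial : ℕ) : ℝ) ^ e := by positivity
  have hF : (0:ℝ) < (((2*l).factorial : ℕ) : ℝ) := by positivity
  have hΛl : (0:ℝ) < lamConst n ^ ((l:ℝ)/((n:ℝ)-1)) := Real.rpow_pos_of_pos hlam0 _
  have hΛ1 : (0:ℝ) < lamConst n ^ ((1:ℝ)/((n:ℝ)-1)) := Real.rpow_pos_of_pos hlam0 _
  have h2l1 : (0:ℝ) < 2*(l:ℝ)+1 := by positivity
  have h2l2 : (0:ℝ) < 2*(l:ℝ)+2 := by positivity
  have h2p : (0:ℝ) < (2:ℝ)^l := by positivity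
  field_simp

theorem coeffA_ratio_ge_one (n : ℕ) (hn : 2 ≤ n) (l : ℕ) (hl : 1 ≤ l) :
    coeffA n (l + 1) / coeffA n l =
      lamConst n ^ ((1 : ℝ) / ((n : ℝ) - 1)) *
        ((l : ℝ) + 1) ^ ((n : ℝ) / ((n : ℝ) - 1)) / (2 * (l : ℝ) + 1) ∧
    1 ≤ coeffA n (l + 1) / coeffA n l ∧ coeffA n l ≤ coeffA n (l + 1) := by
  have hre := ratio_eq n hn l
  have h2l1 : (0:ℝ) < 2*(l:ℝ)+1 := by positivity
  have hkey := key_ineq n hn l hl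
  have hone : 1 ≤ coeffA n (l + 1) / coeffA n l := by
    rw [hre, le_div_iff₀ h2l1, one_mul]; exact hkey
  have hA : 0 < coeffA n l := by
    unfold coeffA
    have hlam0 := lamConst_pos n hn
    positivity
  exact ⟨hre, hone, (one_le_div hA).mp hone⟩
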